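/- Let H be a finite-dimensional complex inner product space with n = finrank ℂ H ≥ 1 and let B be a maximal Boolean sublattice of Submodule ℂ H. Then the atoms of B (minimal elements of B \ {⊥}) are exactly n pairwise orthogonal one-dimensional subspaces of H whose supremum is ⊤, and every element of B is the supremum of the atoms of B below it. -/

import Mathlib

open Submodule

/-- A subset `B` of the lattice of subspaces of a complex inner product space is a
*Boolean sublattice* if it contains `⊥` and `⊤`, is closed under `⊓`, `⊔` and
orthogonal complement, and satisfies the distributive law on its elements. -/
def IsBooleanSublattice {H : Type*} [NormedAddCommGroup H] [InnerProductSpace ℂ H]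
    (B : Set (Submodule ℂ H)) : Prop :=
  ⊥ ∈ B ∧ ⊤ ∈ B ∧
  (∀ x ∈ B, ∀ y ∈ B, x ⊓ y ∈ B) ∧
  (∀ x ∈ B, ∀ y ∈ B, x ⊔ y ∈ B) ∧
  (∀ x ∈ B, xᗮ ∈ B) ∧
  (∀ x ∈ B, ∀ y ∈ B, ∀ z ∈ B, x ⊓ (y ⊔ z) = (x ⊓ y) ⊔ (x ⊓ z))

/-- A Boolean sublattice is *maximal* if it is not properly contained in any other
Boolean sublattice. -/
def IsMaximalBooleanSublattice {H : Type*} [NormedAddCommGroup H] [InnerProductSpace ℂ H]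
    (B : Set (Submodule ℂ H)) : Prop :=
  IsBooleanSublattice B ∧ ∀ B' : Set (Submodule ℂ H), IsBooleanSublattice B' → B ⊆ B' → B' = B

/-- The atoms of a subset `B` of `Submodule ℂ H`: the elements `V ∈ B`, `V ≠ ⊥`,
such that no `W ∈ B` satisfies `⊥ < W < V`. -/
def atomsOf {H : Type*} [NormedAddCommGroup H] [InnerProductSpace ℂ H]
    (B : Set (Submodule ℂ H)) : Set (Submodule ℂ H) :=
  {V | V ∈ B ∧ V ≠ ⊥ ∧ ∀ W ∈ B, ¬(⊥ < W ∧ W < V)}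


section Aux

open Module

set_option linter.unusedSectionVars false

variable {H : Type*} [NormedAddCommGroup H] [InnerProductSpace ℂ H] [FiniteDimensional ℂ H]
  {B : Set (Submodule ℂ H)}

/-- Sums from two orthogonal pieces intersect componentwise. -/
lemma aux_sup_inf_sup {V b₁ b₂ s₁ s₂ : Submodule ℂ H}
    (hb₁ : b₁ ≤ Vᗮ) (hb₂ : b₂ ≤ Vᗮ) (hs₁ : s₁ ≤ V) (hs₂ : s₂ ≤ V) :
    (b₁ ⊔ s₁) ⊓ (b₂ ⊔ s₂) = (b₁ ⊓ b₂) ⊔ (s₁ ⊓ s₂) := by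
  apply le_antisymm
  · intro x hx
    obtain ⟨hx1, hx2⟩ := Submodule.mem_inf.1 hx
    obtain ⟨u₁, hu₁, w₁, hw₁, rfl⟩ := Submodule.mem_sup.1 hx1
    obtain ⟨u₂, hu₂, w₂, hw₂, heq⟩ := Submodule.mem_sup.1 hx2
    have hker : u₁ - u₂ = w₂ - w₁ := by
      rw [sub_eq_sub_iff_add_eq_add, ← heq]; abel
    have hmem : u₁ - u₂ ∈ Vᗮ ⊓ V := by
      refine Submodule.mem_inf.2 ⟨sub_mem (hb₁ hu₁) (hb₂ hu₂), ?_⟩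
      rw [hker]; exact sub_mem (hs₂ hw₂) (hs₁ hw₁)
    have hbot : Vᗮ ⊓ V = ⊥ := by rw [inf_comm]; exact Submodule.inf_orthogonal_eq_bot V
    rw [hbot, Submodule.mem_bot] at hmem
    have hu : u₁ = u₂ := sub_eq_zero.1 hmem
    have hw : w₁ = w₂ := by
      have h0 : w₂ - w₁ = 0 := by rw [← hker, hmem]
      exact (sub_eq_zero.1 h0).symm
    exact Submodule.mem_sup.2 ⟨u₁, Submodule.mem_inf.2 ⟨hu₁, hu ▸ hu₂⟩,
      w₁, Submodule.mem_inf.2 ⟨hw₁, hw ▸ hw₂⟩, rfl⟩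
  · exact sup_le (le_inf (inf_le_left.trans le_sup_left) (inf_le_right.trans le_sup_left))
      (le_inf (inf_le_left.trans le_sup_right) (inf_le_right.trans le_sup_right))

/-- If `X ≤ Yᗮ` and `X ⊔ Y = ⊤` then `X = Yᗮ`. -/
lemma aux_eq_orthogonal {X Y : Submodule ℂ H} (h1 : X ≤ Yᗮ) (h2 : X ⊔ Y = ⊤) : X = Yᗮ := by
  have hinf : X ⊓ Y = ⊥ := by
    refine le_bot_iff.1 ?_
    calc X ⊓ Y ≤ Yᗮ ⊓ Y := inf_le_inf_right _ h1
      _ = ⊥ := by rw [inf_comm]; exact Submodule.inf_orthogonal_eq_bot Y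
  have h3 := Submodule.finrank_sup_add_finrank_inf_eq X Y
  rw [h2, hinf, finrank_bot, finrank_top] at h3
  have h4 := Submodule.finrank_add_finrank_orthogonal Y
  exact Submodule.eq_of_le_of_finrank_eq h1 (by omega)

lemma aux_compat (hB : IsBooleanSublattice B) {x y : Submodule ℂ H}
    (hx : x ∈ B) (hy : y ∈ B) : y = (y ⊓ x) ⊔ (y ⊓ xᗮ) := by
  obtain ⟨-, -, -, -, horth, hdist⟩ := hB
  conv_lhs => rw [← inf_top_eq y, ← Submodule.sup_orthogonal_of_hasOrthogonalProjection (K := x)]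
  exact hdist y hy x hx xᗮ (horth x hx)

lemma aux_le_orth (hB : IsBooleanSublattice B) {x y : Submodule ℂ H}
    (hx : x ∈ B) (hy : y ∈ B) (h : y ⊓ x = ⊥) : y ≤ xᗮ := by
  conv_lhs => rw [aux_compat hB hx hy, h]
  rw [bot_sup_eq]
  exact inf_le_right

lemma aux_atoms_orth (hB : IsBooleanSublattice B) {V W : Submodule ℂ H}
    (hV : V ∈ atomsOf B) (hW : W ∈ atomsOf B) (hne : V ≠ W) : V ≤ Wᗮ := by
  have hinf := hB.2.2.1
  refine aux_le_orth hB hW.1 hV.1 ?_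
  by_contra hbot
  have hle : V ⊓ W ≤ V := inf_le_left
  have hmem : V ⊓ W ∈ B := hinf V hV.1 W hW.1
  have heq : V ⊓ W = V := by
    by_contra hne'
    exact hV.2.2 (V ⊓ W) hmem ⟨bot_lt_iff_ne_bot.2 hbot, lt_of_le_of_ne hle hne'⟩
  have hVW : V ≤ W := heq ▸ inf_le_right
  exact hW.2.2 V hV.1 ⟨bot_lt_iff_ne_bot.2 hV.2.1, lt_of_le_of_ne hVW hne⟩

lemma aux_atoms_finite (hB : IsBooleanSublattice B) : (atomsOf B).Finite := by
  rw [← Set.finite_coe_iff]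
  have hex : ∀ V : atomsOf B, ∃ v : H, v ∈ (V : Submodule ℂ H) ∧ v ≠ 0 := fun V =>
    Submodule.exists_mem_ne_zero_of_ne_bot V.2.2.1
  choose v hv hv0 using hex
  have hli : LinearIndependent ℂ v := by
    refine linearIndependent_of_ne_zero_of_inner_eq_zero hv0 ?_
    intro i j hij
    have hji : (j : Submodule ℂ H) ≤ (i : Submodule ℂ H)ᗮ :=
      aux_atoms_orth hB j.2 i.2 (fun h => hij (Subtype.ext h.symm))
    exact (Submodule.mem_orthogonal _ _).1 (hji (hv j)) (v i) (hv i)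
  exact hli.finite

lemma aux_exists_atom_le (hB : IsBooleanSublattice B) :
    ∀ K ∈ B, K ≠ ⊥ → ∃ a ∈ atomsOf B, a ≤ K := by
  suffices h : ∀ d : ℕ, ∀ K ∈ B, K ≠ ⊥ → finrank ℂ K ≤ d → ∃ a ∈ atomsOf B, a ≤ K by
    intro K hK hKne
    exact h (finrank ℂ K) K hK hKne le_rfl
  intro d
  induction d with
  | zero =>
    intro K _ hKne hd
    exact absurd (Submodule.finrank_eq_zero.1 (Nat.le_zero.1 hd)) hKne
  | succ d ih =>
    intro K hK hKne hd
    by_cases hatom : ∀ W ∈ B, ¬(⊥ < W ∧ W < K)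
    · exact ⟨K, ⟨hK, hKne, hatom⟩, le_rfl⟩
    · push_neg at hatom
      obtain ⟨W, hWB, hWbot, hWK⟩ := hatom
      have hfr : finrank ℂ W < finrank ℂ K := Submodule.finrank_lt_finrank_of_lt hWK
      obtain ⟨a, ha, haW⟩ := ih W hWB (bot_lt_iff_ne_bot.1 hWbot) (by omega)
      exact ⟨a, ha, haW.trans hWK.le⟩

lemma aux_finsetSup_mem (hB : IsBooleanSublattice B) (s : Finset (Submodule ℂ H))
    (h : ∀ x ∈ s, x ∈ B) : s.sup id ∈ B := by
  classical
  induction s using Finset.induction_on with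
  | empty => simpa using hB.1
  | @insert a s ha ih =>
    rw [Finset.sup_insert]
    exact hB.2.2.2.1 _ (h a (Finset.mem_insert_self a s)) _
      (ih (fun x hx => h x (Finset.mem_insert_of_mem hx)))

lemma aux_eq_sSup_atoms (hB : IsBooleanSublattice B) {K : Submodule ℂ H} (hK : K ∈ B) :
    K = sSup {V | V ∈ atomsOf B ∧ V ≤ K} := by
  classical
  set S := sSup {V | V ∈ atomsOf B ∧ V ≤ K} with hS
  have hfin : {V | V ∈ atomsOf B ∧ V ≤ K}.Finite :=
    (aux_atoms_finite hB).subset (fun x hx => hx.1)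
  have hSB : S ∈ B := by
    have h1 : S = hfin.toFinset.sup id := by
      rw [Finset.sup_id_eq_sSup, Set.Finite.coe_toFinset]
    rw [h1]
    exact aux_finsetSup_mem hB _ (fun x hx => (hfin.mem_toFinset.1 hx).1.1)
  have hSK : S ≤ K := sSup_le (fun x hx => hx.2)
  by_contra hne
  have hR : S ⊔ (Sᗮ ⊓ K) = K := Submodule.sup_orthogonal_inf_of_hasOrthogonalProjection hSK
  have hRB : Sᗮ ⊓ K ∈ B := hB.2.2.1 _ (hB.2.2.2.2.1 _ hSB) _ hK
  have hRne : Sᗮ ⊓ K ≠ ⊥ := by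
    intro h0
    rw [h0, sup_bot_eq] at hR
    exact hne hR.symm
  obtain ⟨a, ha, haR⟩ := aux_exists_atom_le hB _ hRB hRne
  have haS : a ≤ S := le_sSup ⟨ha, haR.trans inf_le_right⟩
  have habot : a ≤ ⊥ := by
    have h1 : a ≤ S ⊓ Sᗮ := le_inf haS (haR.trans inf_le_left)
    rwa [Submodule.inf_orthogonal_eq_bot] at h1
  exact ha.2.1 (le_bot_iff.1 habot)

lemma aux_finrank_finsetSup (A : Finset (Submodule ℂ H))
    (horth : ∀ V ∈ A, ∀ W ∈ A, V ≠ W → V ≤ Wᗮ) :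
    finrank ℂ ↥(A.sup id) = ∑ V ∈ A, finrank ℂ ↥V := by
  classical
  induction A using Finset.induction_on with
  | empty => simp
  | @insert a s ha ih =>
    rw [Finset.sup_insert, Finset.sum_insert ha, id_eq]
    have hle : s.sup id ≤ aᗮ := Finset.sup_le fun W hW => by
      simpa using horth W (Finset.mem_insert_of_mem hW) a (Finset.mem_insert_self a s)
        (fun h => ha (h ▸ hW))
    have hdisj : a ⊓ s.sup id = ⊥ := by
      refine le_bot_iff.1 ?_
      calc a ⊓ s.sup id ≤ a ⊓ aᗮ := inf_le_inf_left _ hle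
        _ = ⊥ := Submodule.inf_orthogonal_eq_bot a
    have h1 := Submodule.finrank_sup_add_finrank_inf_eq a (s.sup id)
    rw [hdisj, finrank_bot] at h1
    rw [ih (fun V hV W hW hne => horth V (Finset.mem_insert_of_mem hV) W
      (Finset.mem_insert_of_mem hW) hne)] at h1
    omega

lemma aux_atom_finrank_one (hB : IsMaximalBooleanSublattice B) {V : Submodule ℂ H}
    (hV : V ∈ atomsOf B) : finrank ℂ ↥V = 1 := by
  obtain ⟨hbool, hmax⟩ := hB
  have hbot := hbool.1
  have htop := hbool.2.1
  have hinf := hbool.2.2.1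
  have hsup := hbool.2.2.2.1
  have horth := hbool.2.2.2.2.1
  have hdist := hbool.2.2.2.2.2
  obtain ⟨hVB, hVne, hVatom⟩ := hV
  have h1 : 0 < finrank ℂ ↥V := Nat.pos_of_ne_zero
    (fun h => hVne (Submodule.finrank_eq_zero.1 h))
  by_contra hne1
  have h2 : 2 ≤ finrank ℂ ↥V := by omega
  obtain ⟨v, hvV, hv0⟩ := Submodule.exists_mem_ne_zero_of_ne_bot hVne
  set W : Submodule ℂ H := ℂ ∙ v with hWdef
  have hWV : W ≤ V := (Submodule.span_singleton_le_iff_mem v V).2 hvV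
  have hWrank : finrank ℂ ↥W = 1 := finrank_span_singleton hv0
  have hWnebot : W ≠ ⊥ := fun h => hv0 (Submodule.span_singleton_eq_bot.1 h)
  have hWneV : W ≠ V := fun h => by rw [h] at hWrank; omega
  have hWltV : W < V := lt_of_le_of_ne hWV hWneV
  set U : Submodule ℂ H := Wᗮ ⊓ V with hUdef
  have hUV : U ≤ V := inf_le_right
  have hUleWo : U ≤ Wᗮ := inf_le_left
  have hWUsup : W ⊔ U = V := Submodule.sup_orthogonal_inf_of_hasOrthogonalProjection hWV
  have hWUinf : W ⊓ U = ⊥ := by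
    refine le_bot_iff.1 ?_
    calc W ⊓ U ≤ W ⊓ Wᗮ := inf_le_inf_left _ hUleWo
      _ = ⊥ := Submodule.inf_orthogonal_eq_bot W
  have hUWinf : U ⊓ W = ⊥ := by rw [inf_comm]; exact hWUinf
  have hWVinf : W ⊓ V = W := inf_eq_left.2 hWV
  have hVWinf : V ⊓ W = W := inf_eq_right.2 hWV
  have hUVinf : U ⊓ V = U := inf_eq_left.2 hUV
  have hVUinf : V ⊓ U = U := inf_eq_right.2 hUV
  have hUWsup : U ⊔ W = V := by rw [sup_comm]; exact hWUsup
  have hWVsup : W ⊔ V = V := sup_eq_right.2 hWV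
  have hVWsup : V ⊔ W = V := sup_eq_left.2 hWV
  have hUVsup : U ⊔ V = V := sup_eq_right.2 hUV
  have hVUsup : V ⊔ U = V := sup_eq_left.2 hUV
  set T : Set (Submodule ℂ H) := {⊥, W, U, V} with hTdef
  have hTmem : ∀ s, s ∈ T ↔ s = ⊥ ∨ s = W ∨ s = U ∨ s = V := by
    intro s; simp [hTdef]
  have hTleV : ∀ s ∈ T, s ≤ V := by
    intro s hs
    rcases (hTmem s).1 hs with rfl | rfl | rfl | rfl
    exacts [bot_le, hWV, hUV, le_rfl]
  have hTinf : ∀ s₁ ∈ T, ∀ s₂ ∈ T, s₁ ⊓ s₂ ∈ T := by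
    intro s₁ h₁ s₂ h₂
    rcases (hTmem s₁).1 h₁ with rfl | rfl | rfl | rfl <;>
      rcases (hTmem s₂).1 h₂ with rfl | rfl | rfl | rfl <;>
      simp [hTmem, hWUinf, hUWinf, hWVinf, hVWinf, hUVinf, hVUinf]
  have hTsup : ∀ s₁ ∈ T, ∀ s₂ ∈ T, s₁ ⊔ s₂ ∈ T := by
    intro s₁ h₁ s₂ h₂
    rcases (hTmem s₁).1 h₁ with rfl | rfl | rfl | rfl <;>
      rcases (hTmem s₂).1 h₂ with rfl | rfl | rfl | rfl <;>
      simp [hTmem, hWUsup, hUWsup, hWVsup, hVWsup, hUVsup, hVUsup]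
  have hTdist : ∀ s₁ ∈ T, ∀ s₂ ∈ T, ∀ s₃ ∈ T,
      s₁ ⊓ (s₂ ⊔ s₃) = (s₁ ⊓ s₂) ⊔ (s₁ ⊓ s₃) := by
    intro s₁ h₁ s₂ h₂ s₃ h₃
    rcases (hTmem s₁).1 h₁ with rfl | rfl | rfl | rfl <;>
      rcases (hTmem s₂).1 h₂ with rfl | rfl | rfl | rfl <;>
      rcases (hTmem s₃).1 h₃ with rfl | rfl | rfl | rfl <;>
      simp [hWUinf, hUWinf, hWVinf, hVWinf, hUVinf, hVUinf,
        hWUsup, hUWsup, hWVsup, hVWsup, hUVsup, hVUsup]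
  have hTcompl : ∀ s ∈ T, sᗮ ⊓ V ∈ T ∧ s ⊔ (sᗮ ⊓ V) = V := by
    intro s hs
    rcases (hTmem s).1 hs with rfl | rfl | rfl | h4
    · rw [Submodule.bot_orthogonal_eq_top, top_inf_eq, bot_sup_eq]
      exact ⟨by simp [hTmem], rfl⟩
    · rw [← hUdef]
      exact ⟨by simp [hTmem], hWUsup⟩
    · have hWle : W ≤ Uᗮ ⊓ V :=
        le_inf ((Submodule.le_orthogonal_orthogonal W).trans
          (Submodule.orthogonal_le hUleWo)) hWV
      have hUsup2 : U ⊔ (Uᗮ ⊓ V) = V := Submodule.sup_orthogonal_inf_of_hasOrthogonalProjection hUV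
      have hUinf2 : U ⊓ (Uᗮ ⊓ V) = ⊥ := by
        refine le_bot_iff.1 ?_
        calc U ⊓ (Uᗮ ⊓ V) ≤ U ⊓ Uᗮ := inf_le_inf_left _ inf_le_left
          _ = ⊥ := Submodule.inf_orthogonal_eq_bot U
      have e1 := Submodule.finrank_sup_add_finrank_inf_eq U (Uᗮ ⊓ V)
      rw [hUsup2, hUinf2, finrank_bot] at e1
      have e2 := Submodule.finrank_sup_add_finrank_inf_eq W U
      rw [hWUsup, hWUinf, finrank_bot] at e2
      have hWeq : W = Uᗮ ⊓ V := Submodule.eq_of_le_of_finrank_eq hWle (by omega)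
      exact ⟨by rw [← hWeq]; simp [hTmem], hUsup2⟩
    · have hVo : Vᗮ ⊓ V = ⊥ := by rw [inf_comm]; exact Submodule.inf_orthogonal_eq_bot V
      rw [h4, hVo, sup_bot_eq]
      exact ⟨by simp [hTmem], rfl⟩
  set B' : Set (Submodule ℂ H) := {x | ∃ b ∈ B, b ≤ Vᗮ ∧ ∃ s ∈ T, x = b ⊔ s} with hB'def
  have hBsub : B ⊆ B' := by
    intro b hb
    have hdec := aux_compat hbool hVB hb
    have hbV : b ⊓ V ∈ T := by
      have hmem : b ⊓ V ∈ B := hinf b hb V hVB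
      by_cases h0 : b ⊓ V = ⊥
      · rw [h0]; simp [hTmem]
      · have heq : b ⊓ V = V := by
          by_contra hne'
          exact hVatom (b ⊓ V) hmem ⟨bot_lt_iff_ne_bot.2 h0, lt_of_le_of_ne inf_le_right hne'⟩
        rw [heq]; simp [hTmem]
    exact ⟨b ⊓ Vᗮ, hinf b hb Vᗮ (horth V hVB), inf_le_right, b ⊓ V, hbV,
      by rw [sup_comm]; exact hdec⟩
  have hB'bool : IsBooleanSublattice B' := by
    refine ⟨⟨⊥, hbot, bot_le, ⊥, by simp [hTmem], by simp⟩,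
      ⟨Vᗮ, horth V hVB, le_rfl, V, by simp [hTmem], ?_⟩, ?_, ?_, ?_, ?_⟩
    · rw [sup_comm]
      exact (Submodule.sup_orthogonal_of_hasOrthogonalProjection).symm
    · rintro x ⟨b₁, hb₁B, hb₁, s₁, hs₁, rfl⟩ y ⟨b₂, hb₂B, hb₂, s₂, hs₂, rfl⟩
      exact ⟨b₁ ⊓ b₂, hinf _ hb₁B _ hb₂B, inf_le_left.trans hb₁, s₁ ⊓ s₂, hTinf _ hs₁ _ hs₂,
        aux_sup_inf_sup hb₁ hb₂ (hTleV _ hs₁) (hTleV _ hs₂)⟩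
    · rintro x ⟨b₁, hb₁B, hb₁, s₁, hs₁, rfl⟩ y ⟨b₂, hb₂B, hb₂, s₂, hs₂, rfl⟩
      exact ⟨b₁ ⊔ b₂, hsup _ hb₁B _ hb₂B, sup_le hb₁ hb₂, s₁ ⊔ s₂, hTsup _ hs₁ _ hs₂,
        sup_sup_sup_comm b₁ s₁ b₂ s₂⟩
    · rintro x ⟨b, hbB, hble, s, hs, rfl⟩
      obtain ⟨hs'T, hs'sup⟩ := hTcompl s hs
      refine ⟨bᗮ ⊓ Vᗮ, hinf _ (horth b hbB) _ (horth V hVB), inf_le_right, sᗮ ⊓ V, hs'T, ?_⟩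
      refine (aux_eq_orthogonal ?_ ?_).symm
      · rw [← Submodule.inf_orthogonal]
        refine sup_le (le_inf inf_le_left
          (le_trans inf_le_right (Submodule.orthogonal_le (hTleV s hs))))
          (le_inf (le_trans inf_le_right ?_) inf_le_left)
        exact (Submodule.le_orthogonal_orthogonal V).trans (Submodule.orthogonal_le hble)
      · rw [sup_sup_sup_comm, sup_comm (bᗮ ⊓ Vᗮ) b, sup_comm (sᗮ ⊓ V) s,
          Submodule.sup_orthogonal_inf_of_hasOrthogonalProjection hble, hs'sup, sup_comm]
        exact Submodule.sup_orthogonal_of_hasOrthogonalProjection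
    · rintro x ⟨b₁, hb₁B, hb₁, s₁, hs₁, rfl⟩ y ⟨b₂, hb₂B, hb₂, s₂, hs₂, rfl⟩
        z ⟨b₃, hb₃B, hb₃, s₃, hs₃, rfl⟩
      rw [sup_sup_sup_comm b₂ s₂ b₃ s₃,
        aux_sup_inf_sup hb₁ (sup_le hb₂ hb₃) (hTleV _ hs₁)
          (sup_le (hTleV _ hs₂) (hTleV _ hs₃)),
        aux_sup_inf_sup hb₁ hb₂ (hTleV _ hs₁) (hTleV _ hs₂),
        aux_sup_inf_sup hb₁ hb₃ (hTleV _ hs₁) (hTleV _ hs₃),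
        hdist b₁ hb₁B b₂ hb₂B b₃ hb₃B, hTdist s₁ hs₁ s₂ hs₂ s₃ hs₃,
        sup_sup_sup_comm]
  have hWB : W ∈ B := by
    have heq := hmax B' hB'bool hBsub
    rw [← heq]
    exact ⟨⊥, hbot, bot_le, W, by simp [hTmem], by simp⟩
  exact hVatom W hWB ⟨bot_lt_iff_ne_bot.2 hWnebot, hWltV⟩

end Aux

/-- The atoms of a maximal Boolean sublattice `B` of `Submodule ℂ H` are exactly
`n = finrank ℂ H` pairwise orthogonal one-dimensional subspaces with supremum `⊤`,
and every element of `B` is the supremum of the atoms of `B` below it. -/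
theorem atoms_of_maximalBooleanSublattice {H : Type*}
    [NormedAddCommGroup H] [InnerProductSpace ℂ H] [FiniteDimensional ℂ H]
    (hn : 1 ≤ Module.finrank ℂ H)
    (B : Set (Submodule ℂ H)) (hB : IsMaximalBooleanSublattice B) :
    (∃ A : Finset (Submodule ℂ H),
      (↑A : Set (Submodule ℂ H)) = atomsOf B ∧
      A.card = Module.finrank ℂ H ∧
      (∀ V ∈ A, Module.finrank ℂ V = 1) ∧
      (∀ V ∈ A, ∀ W ∈ A, V ≠ W → V ≤ Wᗮ) ∧
      sSup (↑A : Set (Submodule ℂ H)) = ⊤) ∧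
    ∀ K ∈ B, K = sSup {V | V ∈ atomsOf B ∧ V ≤ K} := by
  classical
  have hbool := hB.1
  have hfin := aux_atoms_finite hbool
  refine ⟨⟨hfin.toFinset, hfin.coe_toFinset, ?_, ?_, ?_, ?_⟩,
    fun K hK => aux_eq_sSup_atoms hbool hK⟩
  · -- card
    have horthA : ∀ V ∈ hfin.toFinset, ∀ W ∈ hfin.toFinset, V ≠ W → V ≤ Wᗮ := by
      intro V hV W hW hne
      exact aux_atoms_orth hbool (hfin.mem_toFinset.1 hV) (hfin.mem_toFinset.1 hW) hne
    have h1 := aux_finrank_finsetSup hfin.toFinset horthA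
    have h2 : hfin.toFinset.sup id = ⊤ := by
      rw [Finset.sup_id_eq_sSup, hfin.coe_toFinset]
      have h3 := aux_eq_sSup_atoms hbool hbool.2.1
      have h4 : {V | V ∈ atomsOf B ∧ V ≤ (⊤ : Submodule ℂ H)} = atomsOf B := by
        ext x; simp
      rw [h4] at h3
      exact h3.symm
    rw [h2, finrank_top] at h1
    have h5 : ∀ V ∈ hfin.toFinset, Module.finrank ℂ ↥V = 1 := by
      intro V hV
      exact aux_atom_finrank_one hB (hfin.mem_toFinset.1 hV)
    rw [Finset.sum_congr rfl h5, Finset.sum_const, smul_eq_mul, mul_one] at h1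
    exact h1.symm
  · intro V hV
    exact aux_atom_finrank_one hB (hfin.mem_toFinset.1 hV)
  · intro V hV W hW hne
    exact aux_atoms_orth hbool (hfin.mem_toFinset.1 hV) (hfin.mem_toFinset.1 hW) hne
  · rw [hfin.coe_toFinset]
    have h3 := aux_eq_sSup_atoms hbool hbool.2.1
    have h4 : {V | V ∈ atomsOf B ∧ V ≤ (⊤ : Submodule ℂ H)} = atomsOf B := by
      ext x; simp
    rw [h4] at h3
    exact h3.symm
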